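/- Let φ = (φ^X, φ^Y) : ℝ^{2n} → ℝⁿ×ℝⁿ be a differentiable symplectic map for the standard symplectic form on ℝ^{2n}, let ι(x,y) = ((x, φ^Y(x,y)), (y, φ^X(x,y))) be its Lagrangian embedding, and let W = {((0,Y),(y,0)) : y,Y ∈ ℝⁿ} ⊆ ℝ^{2n}×ℝ^{2n} be the tangent space of the manifold representing Dirichlet boundary conditions. Then for every z ∈ ℝ^{2n} the intersection of the range of Dι(z) with W has dimension at most n. (Core of the paper's Proposition: in Dirichlet problems for symplectic maps on ℝ^{2n} the tangent spaces of the two Lagrangian submanifolds intersect in a space of dimension at most n, so only singularities expressible in at most n variables can occur.) -/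

import Mathlib

/-- The standard symplectic form on `ℝ^{2n} = ℝⁿ × ℝⁿ`. -/
noncomputable def stdOmega (n : ℕ) (v w : (Fin n → ℝ) × (Fin n → ℝ)) : ℝ :=
  ∑ i, v.1 i * w.2 i - ∑ i, w.1 i * v.2 i

/-- The embedding `ι(x,y) = ((x, φ^Y(x,y)), (y, φ^X(x,y)))`. -/
def iotaEmb (n : ℕ)
    (φ : (Fin n → ℝ) × (Fin n → ℝ) → (Fin n → ℝ) × (Fin n → ℝ)) :
    (Fin n → ℝ) × (Fin n → ℝ) →
      ((Fin n → ℝ) × (Fin n → ℝ)) × ((Fin n → ℝ) × (Fin n → ℝ)) :=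
  fun w => ((w.1, (φ w).2), (w.2, (φ w).1))

/-- The tangent space `W = {((0,Y),(y,0)) : y, Y ∈ ℝⁿ}` of the submanifold
representing Dirichlet boundary conditions. -/
def dirichletW (n : ℕ) :
    Submodule ℝ (((Fin n → ℝ) × (Fin n → ℝ)) × ((Fin n → ℝ) × (Fin n → ℝ))) :=
  ((⊥ : Submodule ℝ (Fin n → ℝ)).prod (⊤ : Submodule ℝ (Fin n → ℝ))).prod
    ((⊤ : Submodule ℝ (Fin n → ℝ)).prod (⊥ : Submodule ℝ (Fin n → ℝ)))

/-- The derivative of `iotaEmb` at `z`. -/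
lemma iotaEmb_fderiv (n : ℕ)
    (φ : (Fin n → ℝ) × (Fin n → ℝ) → (Fin n → ℝ) × (Fin n → ℝ))
    (hdiff : Differentiable ℝ φ) (z : (Fin n → ℝ) × (Fin n → ℝ)) :
    fderiv ℝ (iotaEmb n φ) z =
      ((ContinuousLinearMap.fst ℝ (Fin n → ℝ) (Fin n → ℝ)).prod
        ((ContinuousLinearMap.snd ℝ (Fin n → ℝ) (Fin n → ℝ)).comp (fderiv ℝ φ z))).prod
      ((ContinuousLinearMap.snd ℝ (Fin n → ℝ) (Fin n → ℝ)).prod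
        ((ContinuousLinearMap.fst ℝ (Fin n → ℝ) (Fin n → ℝ)).comp (fderiv ℝ φ z))) := by
  have hφ : HasFDerivAt φ (fderiv ℝ φ z) z := (hdiff z).hasFDerivAt
  have h1 : HasFDerivAt (fun w : (Fin n → ℝ) × (Fin n → ℝ) => w.1)
      (ContinuousLinearMap.fst ℝ (Fin n → ℝ) (Fin n → ℝ)) z := hasFDerivAt_fst
  have h2 : HasFDerivAt (fun w : (Fin n → ℝ) × (Fin n → ℝ) => w.2)
      (ContinuousLinearMap.snd ℝ (Fin n → ℝ) (Fin n → ℝ)) z := hasFDerivAt_snd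
  exact (((HasFDerivAt.prodMk (HasFDerivAt.prodMk h1 hφ.snd) (HasFDerivAt.prodMk h2 hφ.fst))).congr_fderiv rfl).fderiv

theorem stmt_3 (n : ℕ)
    (φ : (Fin n → ℝ) × (Fin n → ℝ) → (Fin n → ℝ) × (Fin n → ℝ))
    (hdiff : Differentiable ℝ φ)
    (hsymp : ∀ z v w, stdOmega n (fderiv ℝ φ z v) (fderiv ℝ φ z w) = stdOmega n v w)
    (z : (Fin n → ℝ) × (Fin n → ℝ)) :
    Module.finrank ℝ
      ↥(LinearMap.range (fderiv ℝ (iotaEmb n φ) z).toLinearMap ⊓ dirichletW n) ≤ n := by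
  set S := LinearMap.range (fderiv ℝ (iotaEmb n φ) z).toLinearMap ⊓ dirichletW n with hS
  -- the projection to the `y` component, restricted to `S`
  let p : ↥S →ₗ[ℝ] (Fin n → ℝ) :=
    { toFun := fun u => (u : ((Fin n → ℝ) × (Fin n → ℝ)) × ((Fin n → ℝ) × (Fin n → ℝ))).2.1
      map_add' := fun u v => rfl
      map_smul' := fun c u => rfl }
  have hinj : Function.Injective p := by
    rw [← LinearMap.ker_eq_bot]
    apply (Submodule.eq_bot_iff _).2
    rintro ⟨u, hu⟩ hpu
    obtain ⟨hrange, hW⟩ := hu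
    obtain ⟨v, hv⟩ := hrange
    have hfd := iotaEmb_fderiv n φ hdiff z
    rw [hfd] at hv
    -- hv : L v = u, with L explicit
    have hv1 : v.1 = u.1.1 := congrArg (fun w => w.1.1) hv
    have hv2 : v.2 = u.2.1 := congrArg (fun w => w.2.1) hv
    have hy : u.2.1 = 0 := by
      have : p ⟨u, ⟨⟨v, by rw [hfd]; exact hv⟩, hW⟩⟩ = u.2.1 := rfl
      exact hpu
    have hx : u.1.1 = 0 := hW.1.1
    have hv0 : v = 0 := by
      apply Prod.ext <;> simp [hv1, hv2, hx, hy]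
    have : u = 0 := by rw [← hv, hv0]; simp
    simp [this]
  calc Module.finrank ℝ ↥S ≤ Module.finrank ℝ (Fin n → ℝ) :=
        LinearMap.finrank_le_finrank_of_injective hinj
    _ = n := Module.finrank_fin_fun ℝ
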